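/- Let h : A → B be a homomorphism of commutative rings and let f ∈ A be an element such that f is a nonzerodivisor on A and h(f) is a nonzerodivisor on B. If B/fB is flat as a module over A/fA and the localization B[1/h(f)] is flat as a module over A[1/f], then B is flat as an A-module. -/

import Mathlib

/-! Auxiliary material for the useful flatness criterion. -/

universe u v

section Helpers

/-- Lift of a ring hom to `ULift`s. -/
private def uliftRingHom' {R : Type*} {S : Type*} [CommRing R] [CommRing S] (g : R →+* S) :
    ULift.{u} R →+* ULift.{v} S where
  toFun x := ⟨g x.down⟩
  map_one' := by ext; simp
  map_mul' x y := by ext; simp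
  map_zero' := by ext; simp
  map_add' x y := by ext; simp

/-- Transfer flatness along a ring equivalence plus a compatible additive equivalence. -/
private theorem flat_of_ringEquiv' {R : Type*} {S : Type*} [CommRing R] [CommRing S]
    {M : Type*} {N : Type*} [AddCommGroup M] [AddCommGroup N]
    [Module R M] [Module S N]
    (e : R ≃+* S) (φ : M ≃+ N) (hc : ∀ (r : R) (m : M), φ (r • m) = e r • φ m)
    (H : Module.Flat R M) : Module.Flat S N := by
  letI : Algebra S R := e.symm.toRingHom.toAlgebra
  letI : Module S M := Module.compHom M (e.symm.toRingHom)
  have hsmulSR : ∀ (s : S) (r : R), s • r = e.symm s * r := fun s r => rfl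
  have hsmulSM : ∀ (s : S) (m : M), s • m = e.symm s • m := fun s m => rfl
  haveI : IsScalarTower S R M := ⟨fun s r m => by
    rw [hsmulSR, hsmulSM, mul_smul]⟩
  have eSR : R ≃ₗ[S] S :=
    { e with
      map_smul' := fun s r => by
        simp [hsmulSR, map_mul] }
  haveI : Module.Flat S R := Module.Flat.of_linearEquiv eSR
  haveI : Module.Flat S M := Module.Flat.trans S R M
  have φ' : M ≃ₗ[S] N :=
    { φ with
      map_smul' := fun s m => by
        show φ (s • m) = s • φ m
        rw [hsmulSM, hc, RingEquiv.apply_symm_apply] }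
  exact Module.Flat.of_linearEquiv φ'.symm

/-- Equational criterion, forward direction, with an index type in the universe of `M`. -/
private theorem isTrivialRelation_of_sum_smul_eq_zero' {R : Type*} [CommRing R] {M : Type v}
    [AddCommGroup M] [Module R M] [Module.Flat R M] {ι : Type*} [Fintype ι] {f : ι → R}
    {x : ι → M} (hsum : ∑ i, f i • x i = 0) :
    ∃ (κ : Type v) (_ : Fintype κ) (a : ι → κ → R) (y : κ → M),
      (∀ i, x i = ∑ j, a i j • y j) ∧ ∀ j, ∑ i, f i * a i j = 0 := by
  obtain ⟨k, a, y, hy, ha⟩ := Module.Flat.isTrivialRelation_of_sum_smul_eq_zero hsum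
  refine ⟨ULift.{v} (Fin k), inferInstance, fun i j => a i j.down, fun j => y j.down,
    fun i => ?_, fun j => ha j.down⟩
  rw [hy i]
  exact (Fintype.sum_equiv Equiv.ulift _ _ (fun _ => rfl)).symm

/-- Equational criterion, backward direction, with index types in the universe of `M`. -/
private theorem flat_of_forall_isTrivialRelation' {R : Type u} [CommRing R] {M : Type u}
    [AddCommGroup M] [Module R M]
    (H : ∀ (ι : Type u) (_ : Fintype ι) (a : ι → R) (x : ι → M), ∑ i, a i • x i = 0 →
      ∃ (κ : Type u) (_ : Fintype κ) (c : ι → κ → R) (y : κ → M),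
        (∀ i, x i = ∑ j, c i j • y j) ∧ (∀ j, ∑ i, a i * c i j = 0)) :
    Module.Flat R M := by
  apply Module.Flat.of_forall_isTrivialRelation
  intro l f x hfx
  rw [← (Equiv.ulift.{u} (α := Fin l)).isTrivialRelation_comp]
  obtain ⟨κ, _, c, y, hy, hc⟩ := H (ULift.{u} (Fin l)) inferInstance (f ∘ Equiv.ulift)
    (x ∘ Equiv.ulift) (by
      exact (Fintype.sum_equiv Equiv.ulift _ (fun i => f i • x i) (fun _ => rfl)).trans hfx)
  refine ⟨Fintype.card κ, fun i j => c i ((Fintype.equivFin κ).symm j),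
    fun j => y ((Fintype.equivFin κ).symm j), fun i => ?_, fun j => hc _⟩
  rw [hy i]
  exact (Fintype.sum_equiv (Fintype.equivFin κ).symm _ _ (fun _ => rfl)).symm

/-- In a flat module, finitely many simultaneous relations on the same family of elements
can be simultaneously trivialized.  Version indexed by `Fin n`. -/
private theorem many_relations_fin' {R : Type u} [CommRing R] {M : Type u} [AddCommGroup M]
    [Module R M] [Module.Flat R M] (n : ℕ) {κ : Type u} [instκ : Fintype κ]
    (c : Fin n → κ → R) (y : κ → M)
    (hrel : ∀ i, ∑ j, c i j • y j = 0) :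
    ∃ (σ : Type u) (_ : Fintype σ) (e : κ → σ → R) (w : σ → M),
      (∀ j, y j = ∑ p, e j p • w p) ∧ (∀ i p, ∑ j, c i j * e j p = 0) := by
  classical
  induction n generalizing κ with
  | zero =>
    exact ⟨κ, inferInstance, fun j p => if j = p then 1 else 0, y,
      fun j => by simp [Finset.sum_ite_eq], fun i p => Fin.elim0 i⟩
  | succ n ih =>
    obtain ⟨κ', _, a, w, hy, hcol⟩ :=
      isTrivialRelation_of_sum_smul_eq_zero' (f := c (Fin.last n)) (x := y)
        (hrel (Fin.last n))
    have hrel' : ∀ i : Fin n, ∑ p, (∑ j, c i.castSucc j * a j p) • w p = 0 := by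
      intro i
      have h0 := hrel i.castSucc
      calc ∑ p, (∑ j, c i.castSucc j * a j p) • w p
          = ∑ j, c i.castSucc j • ∑ p, a j p • w p := by
            simp_rw [Finset.sum_smul, mul_smul, Finset.smul_sum]
            exact Finset.sum_comm
        _ = 0 := by
            simp_rw [← hy]; exact h0
    obtain ⟨σ, _, e', w', hw, hcol'⟩ := ih (fun i p => ∑ j, c i.castSucc j * a j p) w hrel'
    refine ⟨σ, inferInstance, fun j q => ∑ p, a j p * e' p q, w', fun j => ?_, fun i q => ?_⟩
    · calc y j = ∑ p, a j p • w p := hy j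
        _ = ∑ p, a j p • ∑ q, e' p q • w' q := by simp_rw [← hw]
        _ = ∑ q, (∑ p, a j p * e' p q) • w' q := by
            simp_rw [Finset.smul_sum, Finset.sum_smul, mul_smul]
            exact Finset.sum_comm
    · have hswap : ∀ b : κ → R, ∑ j, b j * ∑ p, a j p * e' p q
          = ∑ p, (∑ j, b j * a j p) * e' p q := by
        intro b
        simp_rw [Finset.mul_sum, Finset.sum_mul, mul_assoc]
        exact Finset.sum_comm
      rcases Fin.eq_castSucc_or_eq_last i with ⟨i', rfl⟩ | rfl
      · rw [hswap]; exact hcol' i' q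
      · rw [hswap]
        simp only [hcol]
        simp

/-- In a flat module, finitely many simultaneous relations on the same family of elements
can be simultaneously trivialized. -/
private theorem many_relations' {R : Type u} [CommRing R] {M : Type u} [AddCommGroup M]
    [Module R M] [Module.Flat R M] {ι κ : Type u} [Fintype ι] [Fintype κ]
    (c : ι → κ → R) (y : κ → M)
    (hrel : ∀ i, ∑ j, c i j • y j = 0) :
    ∃ (σ : Type u) (_ : Fintype σ) (e : κ → σ → R) (w : σ → M),
      (∀ j, y j = ∑ p, e j p • w p) ∧ (∀ i p, ∑ j, c i j * e j p = 0) := by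
  obtain ⟨σ, _, e, w, h1, h2⟩ := many_relations_fin' (Fintype.card ι)
    (fun i j => c ((Fintype.equivFin ι).symm i) j) y
    (fun i => hrel _)
  exact ⟨σ, inferInstance, e, w, h1, fun i p => by
    simpa using h2 (Fintype.equivFin ι i) p⟩

/-- Core abstract form of the flatness criterion: descent of trivializations. -/
private theorem coreFlat' {R : Type u} [CommRing R] {M : Type u} [AddCommGroup M] [Module R M]
    (f : R)
    (hfR : ∀ a : R, f * a = 0 → a = 0)
    (hfM : ∀ m : M, f • m = 0 → m = 0)
    (Hquot : ∀ (κ₁ κ₂ : Type u) (_ : Fintype κ₁) (_ : Fintype κ₂)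
      (c : κ₁ → κ₂ → R) (y : κ₂ → M),
      (∀ i, ∃ m, ∑ j, c i j • y j = f • m) →
      ∃ (σ : Type u) (_ : Fintype σ) (e : κ₂ → σ → R) (w : σ → M) (v : κ₂ → M) (g : κ₁ → σ → R),
        (∀ j, y j = (∑ p, e j p • w p) + f • v j) ∧ (∀ i p, ∑ j, c i j * e j p = f * g i p))
    (Hloc : ∀ (ι : Type u) (_ : Fintype ι) (a : ι → R) (x : ι → M), (∑ i, a i • x i = 0) →
      ∃ (K : ℕ) (κ : Type u) (_ : Fintype κ) (c : ι → κ → R) (y : κ → M),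
        (∀ i, f ^ K • x i = ∑ j, c i j • y j) ∧ (∀ j, ∑ i, a i * c i j = 0)) :
    Module.Flat R M := by
  classical
  have step : ∀ (ι : Type u) (_ : Fintype ι) (a : ι → R) (x : ι → M),
      (∑ i, a i • x i = 0) →
      (∃ (κ : Type u) (_ : Fintype κ) (c : ι → κ → R) (y : κ → M),
        (∀ i, f • x i = ∑ j, c i j • y j) ∧ (∀ j, ∑ i, a i * c i j = 0)) →
      ∃ (κ : Type u) (_ : Fintype κ) (c : ι → κ → R) (y : κ → M),
        (∀ i, x i = ∑ j, c i j • y j) ∧ (∀ j, ∑ i, a i * c i j = 0) := by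
    rintro ι _ a x hrel ⟨κ, _, c, y, hy, hcol⟩
    obtain ⟨σ, _, e, w, v, g, hw, hg⟩ := Hquot ι κ inferInstance inferInstance c y
      (fun i => ⟨x i, (hy i).symm⟩)
    refine ⟨σ ⊕ κ, inferInstance, fun i => Sum.elim (g i) (c i),
      Sum.elim w v, fun i => ?_, fun j => ?_⟩
    · have key : f • x i = f • ((∑ p, g i p • w p) + ∑ j, c i j • v j) := by
        calc f • x i = ∑ j, c i j • y j := hy i
          _ = ∑ j, c i j • ((∑ p, e j p • w p) + f • v j) := by simp_rw [← hw]
          _ = (∑ j, ∑ p, (c i j * e j p) • w p) + ∑ j, c i j • f • v j := by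
              simp [Finset.sum_add_distrib, Finset.smul_sum, mul_smul]
          _ = (∑ p, (f * g i p) • w p) + ∑ j, c i j • f • v j := by
              rw [Finset.sum_comm]
              congr 1
              refine Finset.sum_congr rfl fun p _ => ?_
              rw [← Finset.sum_smul, hg i p]
          _ = f • ((∑ p, g i p • w p) + ∑ j, c i j • v j) := by
              simp [Finset.smul_sum, mul_smul, smul_comm f]
      have hx : x i = (∑ p, g i p • w p) + ∑ j, c i j • v j :=
        sub_eq_zero.mp (hfM _ (by rw [smul_sub, key, sub_self]))
      rw [Fintype.sum_sum_type]
      simpa using hx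
    · rcases j with p | j
      · apply hfR
        calc f * ∑ i, a i * Sum.elim (g i) (c i) (Sum.inl p)
            = ∑ i, a i * (f * g i p) := by
              rw [Finset.mul_sum]; exact Finset.sum_congr rfl fun i _ => by simp; ring
          _ = ∑ i, a i * ∑ j, c i j * e j p := by simp_rw [hg]
          _ = ∑ j, (∑ i, a i * c i j) * e j p := by
              simp_rw [Finset.mul_sum, Finset.sum_mul, mul_assoc]
              exact Finset.sum_comm
          _ = 0 := by simp [hcol]
      · simpa using hcol j
  have descend : ∀ (K : ℕ) (ι : Type u) (_ : Fintype ι) (a : ι → R) (x : ι → M),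
      (∑ i, a i • x i = 0) →
      (∃ (κ : Type u) (_ : Fintype κ) (c : ι → κ → R) (y : κ → M),
        (∀ i, f ^ K • x i = ∑ j, c i j • y j) ∧ (∀ j, ∑ i, a i * c i j = 0)) →
      ∃ (κ : Type u) (_ : Fintype κ) (c : ι → κ → R) (y : κ → M),
        (∀ i, x i = ∑ j, c i j • y j) ∧ (∀ j, ∑ i, a i * c i j = 0) := by
    intro K
    induction K with
    | zero =>
      rintro ι _ a x _ ⟨κ, _, c, y, hy, hcol⟩
      exact ⟨κ, inferInstance, c, y, fun i => by simpa using hy i, hcol⟩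
    | succ K ih =>
      rintro ι instι a x hrel ⟨κ, instκ, c, y, hy, hcol⟩
      have hrelK : ∑ i, a i • (f ^ K • x i) = 0 := by
        have h2 : ∑ i, a i • (f ^ K • x i) = f ^ K • ∑ i, a i • x i := by
          rw [Finset.smul_sum]
          exact Finset.sum_congr rfl fun i _ => smul_comm _ _ _
        rw [h2, hrel, smul_zero]
      have hyK : ∀ i, f • (f ^ K • x i) = ∑ j, c i j • y j := by
        intro i; rw [← mul_smul, ← pow_succ']; exact hy i
      exact ih ι instι a x hrel
        (step ι instι a (fun i => f ^ K • x i) hrelK ⟨κ, instκ, c, y, hyK, hcol⟩)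
  apply flat_of_forall_isTrivialRelation'
  intro ι _ a x hrel
  obtain ⟨K, κ, instκ, c, y, hy, hcol⟩ := Hloc ι inferInstance a x hrel
  exact descend K ι inferInstance a x hrel ⟨κ, instκ, c, y, hy, hcol⟩

/-- Common denominators in a localization away from an element. -/
private lemma exists_common_denom' {R : Type*} [CommRing R] (f : R) {S : Type*} [CommRing S]
    [Algebra R S] [IsLocalization.Away f S] {σ : Type*} [Fintype σ] (z : σ → S) :
    ∃ (N : ℕ) (d : σ → R), ∀ s, z s * algebraMap R S (f ^ N) = algebraMap R S (d s) := by
  classical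
  have hsurj : ∀ s, ∃ (r : R) (n : ℕ), z s * algebraMap R S (f ^ n) = algebraMap R S r := by
    intro s
    obtain ⟨⟨r, m⟩, hm⟩ := IsLocalization.surj (M := Submonoid.powers f) (z s)
    obtain ⟨n, hn⟩ := m.2
    exact ⟨r, n, by simp only [← hn] at hm; exact hm⟩
  choose r n hrn using hsurj
  set N := Finset.univ.sup n with hN
  refine ⟨N, fun s => r s * f ^ (N - n s), fun s => ?_⟩
  have hle : n s ≤ N := Finset.le_sup (Finset.mem_univ s)
  calc z s * algebraMap R S (f ^ N)
      = z s * algebraMap R S (f ^ n s) * algebraMap R S (f ^ (N - n s)) := by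
        rw [mul_assoc, ← map_mul, ← pow_add, Nat.add_sub_cancel' hle]
    _ = algebraMap R S (r s * f ^ (N - n s)) := by rw [hrn s, ← map_mul]

/-- `.down` commutes with finite sums. -/
private lemma down_sum' {γ : Type*} [Fintype γ] {G : Type*} [AddCommMonoid G]
    (z : γ → ULift.{v} G) : (∑ j, z j).down = ∑ j, (z j).down := by
  exact map_sum (AddEquiv.ulift (α := G)) z Finset.univ

end Helpers

/-- The ring homomorphism `A ⧸ (f) →+* B ⧸ (h f)` induced by `h : A →+* B`. -/
noncomputable def inducedQuotientMap {A B : Type*} [CommRing A] [CommRing B]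
    (h : A →+* B) (f : A) :
    A ⧸ Ideal.span {f} →+* B ⧸ Ideal.span {h f} :=
  Ideal.quotientMap (Ideal.span {h f}) h
    (Ideal.span_le.mpr (Set.singleton_subset_iff.mpr
      (Ideal.mem_comap.mpr (Ideal.subset_span (Set.mem_singleton _)))))

set_option maxHeartbeats 3200000 in
private theorem flat_of_quotient_flat_of_localization_flat_aux
    {A : Type u} {B : Type v} [CommRing A] [CommRing B] (h : A →+* B) (f : A)
    (hfA : f ∈ nonZeroDivisors A) (hfB : h f ∈ nonZeroDivisors B)
    (hquot : letI := (inducedQuotientMap h f).toAlgebra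
      Module.Flat (A ⧸ Ideal.span {f}) (B ⧸ Ideal.span {h f}))
    (hloc : letI := (Localization.awayMap h f).toAlgebra
      Module.Flat (Localization.Away f) (Localization.Away (h f))) :
    letI := h.toAlgebra
    Module.Flat A B := by
  letI := h.toAlgebra
  letI := (inducedQuotientMap h f).toAlgebra
  letI := (Localization.awayMap h f).toAlgebra
  have hquot' : Module.Flat (A ⧸ Ideal.span {f}) (B ⧸ Ideal.span {h f}) := hquot
  have hloc' : Module.Flat (Localization.Away f) (Localization.Away (h f)) := hloc
  show Module.Flat A B
  letI g₀ : ULift.{v} A →+* ULift.{u} B := uliftRingHom' h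
  letI : Algebra (ULift.{v} A) (ULift.{u} B) := g₀.toAlgebra
  have main : Module.Flat (ULift.{v} A) (ULift.{u} B) := by
    apply coreFlat' (ULift.up f)
    · intro a ha
      ext
      exact mem_nonZeroDivisors_iff_right.mp hfA _ (by rw [mul_comm]; exact congrArg ULift.down ha)
    · intro m hm
      ext
      exact mem_nonZeroDivisors_iff_right.mp hfB _ (by rw [mul_comm]; exact congrArg ULift.down hm)
    · -- Hquot from flatness of `B/fB` over `A/fA`
      intro κ₁ κ₂ inst1 inst2 c y hmem
      letI gQ : ULift.{v} (A ⧸ Ideal.span {f}) →+* ULift.{u} (B ⧸ Ideal.span {h f}) :=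
        uliftRingHom' (inducedQuotientMap h f)
      letI : Algebra (ULift.{v} (A ⧸ Ideal.span {f})) (ULift.{u} (B ⧸ Ideal.span {h f})) :=
        gQ.toAlgebra
      haveI flatQ : Module.Flat (ULift.{v} (A ⧸ Ideal.span {f}))
          (ULift.{u} (B ⧸ Ideal.span {h f})) :=
        flat_of_ringEquiv' (ULift.ringEquiv.symm) (AddEquiv.ulift.symm) (fun r m => rfl) hquot'
      have hπ : ∀ a : A, inducedQuotientMap h f (Ideal.Quotient.mk (Ideal.span {f}) a)
          = Ideal.Quotient.mk (Ideal.span {h f}) (h a) := fun a => Ideal.quotientMap_mk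
      have hrel : ∀ i, ∑ j,
          (ULift.up (Ideal.Quotient.mk (Ideal.span {f}) (c i j).down)
            : ULift.{v} (A ⧸ Ideal.span {f})) •
          (ULift.up (Ideal.Quotient.mk (Ideal.span {h f}) (y j).down)
            : ULift.{u} (B ⧸ Ideal.span {h f})) = 0 := by
        intro i
        obtain ⟨m, hm⟩ := hmem i
        apply ULift.down_injective
        rw [down_sum']
        show ∑ j, inducedQuotientMap h f (Ideal.Quotient.mk (Ideal.span {f}) (c i j).down)
            * Ideal.Quotient.mk (Ideal.span {h f}) ((y j).down) = (0 : B ⧸ Ideal.span {h f})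
        have hmk0 : Ideal.Quotient.mk (Ideal.span {h f}) (h f) = 0 :=
          Ideal.Quotient.eq_zero_iff_mem.mpr (Ideal.subset_span (Set.mem_singleton _))
        calc ∑ j, inducedQuotientMap h f (Ideal.Quotient.mk (Ideal.span {f}) (c i j).down)
              * Ideal.Quotient.mk (Ideal.span {h f}) ((y j).down)
            = ∑ j, Ideal.Quotient.mk (Ideal.span {h f}) (h ((c i j).down) * (y j).down) := by
              refine Finset.sum_congr rfl fun j _ => ?_
              rw [hπ, ← map_mul]
          _ = Ideal.Quotient.mk (Ideal.span {h f}) ((∑ j, c i j • y j).down) := by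
              rw [← map_sum, down_sum']
              rfl
          _ = Ideal.Quotient.mk (Ideal.span {h f}) (h f * m.down) := by
              rw [hm]; rfl
          _ = 0 := by rw [map_mul, hmk0, zero_mul]
      obtain ⟨σ, instσ, ebar, wbar, hw, hcol⟩ := many_relations'
        (fun i j => (ULift.up (Ideal.Quotient.mk (Ideal.span {f}) (c i j).down)
          : ULift.{v} (A ⧸ Ideal.span {f})))
        (fun j => (ULift.up (Ideal.Quotient.mk (Ideal.span {h f}) (y j).down)
          : ULift.{u} (B ⧸ Ideal.span {h f}))) hrel
      choose E hE using fun (j : κ₂) (p : σ) => Ideal.Quotient.mk_surjective ((ebar j p).down)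
      choose W hW using fun (p : σ) => Ideal.Quotient.mk_surjective ((wbar p).down)
      have hrepr : ∀ j, Ideal.Quotient.mk (Ideal.span {h f})
          ((y j).down - ∑ p, h (E j p) * W p) = 0 := by
        intro j
        have h1 : Ideal.Quotient.mk (Ideal.span {h f}) ((y j).down)
            = ∑ p, Ideal.Quotient.mk (Ideal.span {h f}) (h (E j p) * W p) := by
          have h2 := congrArg ULift.down (hw j)
          rw [down_sum'] at h2
          refine h2.trans (Finset.sum_congr rfl fun p _ => ?_)
          show inducedQuotientMap h f ((ebar j p).down) * (wbar p).down = _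
          rw [← hE j p, ← hW p, hπ, map_mul]
        rw [map_sub, h1, map_sum, sub_self]
      have hvj : ∀ j, ∃ t, t * h f = (y j).down - ∑ p, h (E j p) * W p := by
        intro j
        rw [← Ideal.mem_span_singleton']
        exact Ideal.Quotient.eq_zero_iff_mem.mp (hrepr j)
      choose T hT using hvj
      have hgp : ∀ (i : κ₁) (p : σ), ∃ g, g * f = ∑ j, (c i j).down * E j p := by
        intro i p
        rw [← Ideal.mem_span_singleton']
        apply Ideal.Quotient.eq_zero_iff_mem.mp
        have h2 := congrArg ULift.down (hcol i p)
        rw [down_sum'] at h2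
        calc Ideal.Quotient.mk (Ideal.span {f}) (∑ j, (c i j).down * E j p)
            = ∑ j, ((ULift.up (Ideal.Quotient.mk (Ideal.span {f}) (c i j).down)
                : ULift.{v} (A ⧸ Ideal.span {f})) * ebar j p).down := by
              rw [map_sum]
              refine Finset.sum_congr rfl fun j _ => ?_
              show Ideal.Quotient.mk (Ideal.span {f}) ((c i j).down * E j p)
                = Ideal.Quotient.mk (Ideal.span {f}) ((c i j).down) * (ebar j p).down
              rw [map_mul, hE]
          _ = 0 := h2
      choose G hG using hgp
      refine ⟨σ, instσ, fun j p => ULift.up (E j p), fun p => ULift.up (W p),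
        fun j => ULift.up (T j), fun i p => ULift.up (G i p), fun j => ?_, fun i p => ?_⟩
      · apply ULift.down_injective
        show (y j).down = (∑ p, (ULift.up (E j p) : ULift.{v} A) •
            (ULift.up (W p) : ULift.{u} B)).down + h f * T j
        rw [down_sum']
        show (y j).down = (∑ p, h (E j p) * W p) + h f * T j
        calc (y j).down
            = (∑ p, h (E j p) * W p) + ((y j).down - ∑ p, h (E j p) * W p) := by ring
          _ = (∑ p, h (E j p) * W p) + h f * T j := by rw [← hT j]; ring
      · apply ULift.down_injective
        show (∑ j, c i j * (ULift.up (E j p) : ULift.{v} A)).down = f * G i p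
        rw [down_sum']
        show ∑ j, (c i j).down * E j p = f * G i p
        rw [← hG i p, mul_comm]
    · -- Hloc from flatness of `B[1/hf]` over `A[1/f]`
      intro ι instι a x hrel
      letI gL : ULift.{v} (Localization.Away f) →+* ULift.{u} (Localization.Away (h f)) :=
        uliftRingHom' (Localization.awayMap h f)
      letI : Algebra (ULift.{v} (Localization.Away f))
          (ULift.{u} (Localization.Away (h f))) := gL.toAlgebra
      haveI flatL : Module.Flat (ULift.{v} (Localization.Away f))
          (ULift.{u} (Localization.Away (h f))) :=
        flat_of_ringEquiv' (ULift.ringEquiv.symm) (AddEquiv.ulift.symm) (fun r m => rfl) hloc'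
      have hμα : ∀ r : A, Localization.awayMap h f (algebraMap A (Localization.Away f) r)
          = algebraMap B (Localization.Away (h f)) (h r) := fun r => by
        simp [Localization.awayMap, IsLocalization.Away.map, IsLocalization.map_eq]
      have hαinj : Function.Injective (algebraMap A (Localization.Away f)) :=
        IsLocalization.injective _ (Submonoid.powers_le.mpr hfA)
      have hβinj : Function.Injective (algebraMap B (Localization.Away (h f))) :=
        IsLocalization.injective _ (Submonoid.powers_le.mpr hfB)
      have hrelL : ∑ i,
          (ULift.up (algebraMap A (Localization.Away f) (a i).down)
            : ULift.{v} (Localization.Away f)) •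
          (ULift.up (algebraMap B (Localization.Away (h f)) (x i).down)
            : ULift.{u} (Localization.Away (h f))) = 0 := by
        apply ULift.down_injective
        rw [down_sum']
        show ∑ i, Localization.awayMap h f (algebraMap A (Localization.Away f) (a i).down)
            * algebraMap B (Localization.Away (h f)) ((x i).down)
            = (0 : Localization.Away (h f))
        calc ∑ i, Localization.awayMap h f (algebraMap A (Localization.Away f) (a i).down)
              * algebraMap B (Localization.Away (h f)) ((x i).down)
            = ∑ i, algebraMap B (Localization.Away (h f)) ((a i • x i).down) := by
              refine Finset.sum_congr rfl fun i _ => ?_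
              rw [hμα, ← map_mul]
              rfl
          _ = algebraMap B (Localization.Away (h f)) ((∑ i, a i • x i).down) := by
              rw [← map_sum, down_sum']
          _ = 0 := by rw [hrel]; exact map_zero _
      obtain ⟨κ, instκ, C, Y, hY, hC⟩ := isTrivialRelation_of_sum_smul_eq_zero'
        (f := fun i => (ULift.up (algebraMap A (Localization.Away f) (a i).down)
          : ULift.{v} (Localization.Away f)))
        (x := fun i => (ULift.up (algebraMap B (Localization.Away (h f)) (x i).down)
          : ULift.{u} (Localization.Away (h f)))) hrelL
      obtain ⟨N₁, D, hD⟩ := exists_common_denom' f (fun q : ι × κ => (C q.1 q.2).down)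
      obtain ⟨N₂, Z, hZ⟩ := exists_common_denom' (h f) (fun j => (Y j).down)
      have hpow : ∀ K : ℕ, ((ULift.up f : ULift.{v} A) ^ K).down = f ^ K := by
        intro K
        induction K with
        | zero => rfl
        | succ K ih => rw [pow_succ, pow_succ, ← ih]; rfl
      refine ⟨N₁ + N₂, κ, instκ, fun i j => ULift.up (D (i, j)), fun j => ULift.up (Z j),
        fun i => ?_, fun j => ?_⟩
      · have hxK : (ULift.up f : ULift.{v} A) ^ (N₁ + N₂) = ULift.up (f ^ (N₁ + N₂)) := by
          apply ULift.down_injective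
          rw [hpow]
        rw [hxK]
        apply ULift.down_injective
        show h (f ^ (N₁ + N₂)) * (x i).down
          = (∑ j, (ULift.up (D (i, j)) : ULift.{v} A) • (ULift.up (Z j) : ULift.{u} B)).down
        rw [down_sum']
        show h (f ^ (N₁ + N₂)) * (x i).down = ∑ j, h (D (i, j)) * Z j
        apply hβinj
        have hx : algebraMap B (Localization.Away (h f)) ((x i).down)
            = ∑ j, Localization.awayMap h f ((C i j).down) * (Y j).down := by
          have h2 := congrArg ULift.down (hY i)
          rw [down_sum'] at h2
          exact h2
        calc algebraMap B (Localization.Away (h f)) (h (f ^ (N₁ + N₂)) * (x i).down)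
            = Localization.awayMap h f (algebraMap A (Localization.Away f) (f ^ (N₁ + N₂)))
              * algebraMap B (Localization.Away (h f)) ((x i).down) := by
              rw [map_mul, hμα]
          _ = ∑ j, Localization.awayMap h f
                (algebraMap A (Localization.Away f) (f ^ N₁) * (C i j).down)
              * (Localization.awayMap h f (algebraMap A (Localization.Away f) (f ^ N₂))
                * (Y j).down) := by
              rw [hx, Finset.mul_sum]
              refine Finset.sum_congr rfl fun j _ => ?_
              rw [pow_add, map_mul, map_mul, map_mul]
              ring
          _ = ∑ j, algebraMap B (Localization.Away (h f)) (h (D (i, j)) * Z j) := by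
              refine Finset.sum_congr rfl fun j _ => ?_
              have h1 : algebraMap A (Localization.Away f) (f ^ N₁) * (C i j).down
                  = algebraMap A (Localization.Away f) (D (i, j)) := by
                rw [mul_comm]; exact hD (i, j)
              have h2 : Localization.awayMap h f
                    (algebraMap A (Localization.Away f) (f ^ N₂)) * (Y j).down
                  = algebraMap B (Localization.Away (h f)) (Z j) := by
                rw [hμα, map_pow, mul_comm]; exact hZ j
              rw [h1, h2, hμα, map_mul]
          _ = algebraMap B (Localization.Away (h f)) (∑ j, h (D (i, j)) * Z j) :=
              (map_sum _ _ _).symm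
      · apply ULift.down_injective
        show (∑ i, a i * (ULift.up (D (i, j)) : ULift.{v} A)).down = (0 : A)
        rw [down_sum']
        show ∑ i, (a i).down * D (i, j) = 0
        apply hαinj
        rw [map_sum, map_zero]
        have hdm : ∀ (r : Localization.Away f) (s : ULift.{v} (Localization.Away f)),
            ((ULift.up r) * s).down = r * s.down := fun _ _ => rfl
        have hd0 : (0 : ULift.{v} (Localization.Away f)).down = 0 := rfl
        have hCj : ∑ i, algebraMap A (Localization.Away f) ((a i).down) * (C i j).down
            = 0 := by
          have h2 := congrArg ULift.down (hC j)
          rw [down_sum'] at h2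
          simp only [hdm, hd0] at h2
          exact h2
        calc ∑ i, algebraMap A (Localization.Away f) ((a i).down * D (i, j))
            = ∑ i, (algebraMap A (Localization.Away f) ((a i).down) * (C i j).down)
              * algebraMap A (Localization.Away f) (f ^ N₁) := by
              refine Finset.sum_congr rfl fun i _ => ?_
              rw [map_mul, ← hD (i, j)]
              ring
          _ = (∑ i, algebraMap A (Localization.Away f) ((a i).down) * (C i j).down)
              * algebraMap A (Localization.Away f) (f ^ N₁) := (Finset.sum_mul _ _ _).symm
          _ = 0 := by rw [hCj, zero_mul]
  refine flat_of_ringEquiv' (ULift.ringEquiv) (AddEquiv.ulift) (fun r m => ?_) main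
  show (r • m).down = r.down • m.down
  rfl

/-- **Useful flatness criterion 1, flat case.**
Let `h : A → B` be a map of commutative rings, `f ∈ A` a nonzerodivisor on `A` with `h f` a
nonzerodivisor on `B`.  If `B/fB` is flat over `A/fA` and `B[1/(h f)]` is flat over `A[1/f]`,
then `B` is flat over `A`. -/
theorem flat_of_quotient_flat_of_localization_flat
    {A B : Type*} [CommRing A] [CommRing B] (h : A →+* B) (f : A)
    (hfA : f ∈ nonZeroDivisors A) (hfB : h f ∈ nonZeroDivisors B)
    (hquot : letI := (inducedQuotientMap h f).toAlgebra
      Module.Flat (A ⧸ Ideal.span {f}) (B ⧸ Ideal.span {h f}))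
    (hloc : letI := (Localization.awayMap h f).toAlgebra
      Module.Flat (Localization.Away f) (Localization.Away (h f))) :
    letI := h.toAlgebra
    Module.Flat A B :=
  flat_of_quotient_flat_of_localization_flat_aux h f hfA hfB hquot hloc
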